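/- For the one-dimensional kernel k(z) = 1/z² on (0, ∞) and the ε-regularized step u_ε as above on one period, the double integral ∫∫_{0<x<x+z<L} (u_ε(x+z) - u_ε(x))²/z² dx dz diverges logarithmically: there exist constants 0 < c₁ ≤ c₂ (depending on L) such that c₁ ln(1/ε) ≤ ∫∫ ≤ c₂ ln(1/ε) for all sufficiently small ε > 0. -/

import Mathlib

open MeasureTheory Set

/-- The `ε`-regularized step profile on one period `[0, L]`. -/
noncomputable def uReg (L ε x : ℝ) : ℝ :=
  if x ≤ L / 2 then 1
  else if x ≤ L / 2 + ε then 1 - (x - L / 2) / ε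
  else if x ≤ L - ε then 0
  else (x - (L - ε)) / ε

noncomputable def innerI (L ε x : ℝ) : ℝ :=
  ∫ z in Ioo 0 (L - x), (uReg L ε (x + z) - uReg L ε x)^2 / z^2

section Aux
variable {L ε : ℝ}

lemma uReg_eq (hε : 0 < ε) (hεL : ε < L/8) {x : ℝ} (hx : x ≤ L) :
    uReg L ε x = min 1 (max 0 ((L/2 + ε - x)/ε)) + max 0 (min 1 ((x - (L - ε))/ε)) := by
  have hL : 0 < L := by linarith
  unfold uReg
  split_ifs with h1 h2 h3
  · have e1 : max 0 ((L/2 + ε - x)/ε) = (L/2 + ε - x)/ε :=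
      max_eq_right (div_nonneg (by linarith) hε.le)
    have e2 : min 1 ((L/2 + ε - x)/ε) = 1 :=
      min_eq_left (by rw [le_div_iff₀ hε]; linarith)
    have e3 : min 1 ((x - (L - ε))/ε) = (x - (L - ε))/ε :=
      min_eq_right (by rw [div_le_one hε]; linarith)
    have e4 : max 0 ((x - (L - ε))/ε) = 0 :=
      max_eq_left (div_nonpos_of_nonpos_of_nonneg (by linarith) hε.le)
    rw [e1, e2, e3, e4]; ring
  · have e1 : max 0 ((L/2 + ε - x)/ε) = (L/2 + ε - x)/ε :=
      max_eq_right (div_nonneg (by linarith) hε.le)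
    have e2 : min 1 ((L/2 + ε - x)/ε) = (L/2 + ε - x)/ε :=
      min_eq_right (by rw [div_le_one hε]; linarith)
    have e3 : min 1 ((x - (L - ε))/ε) = (x - (L - ε))/ε :=
      min_eq_right (by rw [div_le_one hε]; linarith)
    have e4 : max 0 ((x - (L - ε))/ε) = 0 :=
      max_eq_left (div_nonpos_of_nonpos_of_nonneg (by linarith) hε.le)
    rw [e1, e2, e3, e4]; field_simp; ring
  · have e1 : max 0 ((L/2 + ε - x)/ε) = 0 :=
      max_eq_left (div_nonpos_of_nonpos_of_nonneg (by linarith) hε.le)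
    have e3 : min 1 ((x - (L - ε))/ε) = (x - (L - ε))/ε :=
      min_eq_right (by rw [div_le_one hε]; linarith)
    have e4 : max 0 ((x - (L - ε))/ε) = 0 :=
      max_eq_left (div_nonpos_of_nonpos_of_nonneg (by linarith) hε.le)
    rw [e1, e3, e4]; simp
  · have e1 : max 0 ((L/2 + ε - x)/ε) = 0 :=
      max_eq_left (div_nonpos_of_nonpos_of_nonneg (by linarith) hε.le)
    have e3 : min 1 ((x - (L - ε))/ε) = (x - (L - ε))/ε :=
      min_eq_right (by rw [div_le_one hε]; linarith)
    have e4 : max 0 ((x - (L - ε))/ε) = (x - (L - ε))/ε :=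
      max_eq_right (div_nonneg (by linarith) hε.le)
    rw [e1, e3, e4]; simp

lemma uReg_nonneg (hε : 0 < ε) (hεL : ε < L/8) {x : ℝ} (hx : x ≤ L) :
    0 ≤ uReg L ε x := by
  rw [uReg_eq hε hεL hx]
  have h1 : (0:ℝ) ≤ min 1 (max 0 ((L/2 + ε - x)/ε)) := le_min one_pos.le (le_max_left _ _)
  have h2 : (0:ℝ) ≤ max 0 (min 1 ((x - (L - ε))/ε)) := le_max_left _ _
  linarith

lemma uReg_le_one (hε : 0 < ε) (hεL : ε < L/8) {x : ℝ} (hx : x ≤ L) :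
    uReg L ε x ≤ 1 := by
  rw [uReg_eq hε hεL hx]
  rcases le_or_gt x (L - ε) with h | h
  · have e4 : max 0 (min 1 ((x - (L - ε))/ε)) = 0 := by
      rw [min_eq_right (by rw [div_le_one hε]; linarith)]
      exact max_eq_left (div_nonpos_of_nonpos_of_nonneg (by linarith) hε.le)
    rw [e4]; simpa using min_le_left _ _
  · have e1 : min 1 (max 0 ((L/2 + ε - x)/ε)) = 0 := by
      rw [max_eq_left (div_nonpos_of_nonpos_of_nonneg (by linarith) hε.le)]
      simp
    rw [e1]; simpa using max_le one_pos.le (min_le_left _ _)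

lemma uReg_lip (hε : 0 < ε) (hεL : ε < L/8) {x y : ℝ} (hx : x ≤ L) (hy : y ≤ L) :
    |uReg L ε y - uReg L ε x| ≤ 2/ε * |y - x| := by
  rw [uReg_eq hε hεL hx, uReg_eq hε hεL hy]
  have key : ∀ a b : ℝ, |min 1 (max 0 a) - min 1 (max 0 b)| ≤ |a - b| := by
    intro a b
    calc |min 1 (max 0 a) - min 1 (max 0 b)| ≤ max |1-1| |max 0 a - max 0 b| :=
          abs_min_sub_min_le_max _ _ _ _
      _ ≤ max |1-1| (max |(0:ℝ)-0| |a - b|) := by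
          exact max_le_max le_rfl (abs_max_sub_max_le_max _ _ _ _)
      _ ≤ |a - b| := by simp [abs_nonneg]
  have key2 : ∀ a b : ℝ, |max 0 (min 1 a) - max 0 (min 1 b)| ≤ |a - b| := by
    intro a b
    calc |max 0 (min 1 a) - max 0 (min 1 b)| ≤ max |(0:ℝ)-0| |min 1 a - min 1 b| :=
          abs_max_sub_max_le_max _ _ _ _
      _ ≤ max |(0:ℝ)-0| (max |(1:ℝ)-1| |a - b|) := by
          exact max_le_max le_rfl (abs_min_sub_min_le_max _ _ _ _)
      _ ≤ |a - b| := by simp [abs_nonneg]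
  have h1 := key ((L/2 + ε - y)/ε) ((L/2 + ε - x)/ε)
  have h2 := key2 ((y - (L - ε))/ε) ((x - (L - ε))/ε)
  have e1 : (L/2 + ε - y)/ε - (L/2 + ε - x)/ε = (x - y)/ε := by ring
  have e2 : (y - (L - ε))/ε - (x - (L - ε))/ε = (y - x)/ε := by ring
  rw [e1] at h1; rw [e2] at h2
  have e3 : |(x - y)/ε| = |y - x|/ε := by
    rw [abs_div, abs_of_pos hε, abs_sub_comm]
  have e4 : |(y - x)/ε| = |y - x|/ε := by rw [abs_div, abs_of_pos hε]
  rw [e3] at h1; rw [e4] at h2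
  calc |_| ≤ |min 1 (max 0 ((L/2 + ε - y)/ε)) - min 1 (max 0 ((L/2 + ε - x)/ε))|
      + |max 0 (min 1 ((y - (L - ε))/ε)) - max 0 (min 1 ((x - (L - ε))/ε))| := by
        apply abs_sub_le_iff.mpr; constructor <;>
        · have := abs_le.mp h1
          nlinarith [abs_nonneg (min 1 (max 0 ((L/2 + ε - y)/ε)) - min 1 (max 0 ((L/2 + ε - x)/ε))), le_abs_self (min 1 (max 0 ((L/2 + ε - y)/ε)) - min 1 (max 0 ((L/2 + ε - x)/ε))), neg_abs_le (min 1 (max 0 ((L/2 + ε - y)/ε)) - min 1 (max 0 ((L/2 + ε - x)/ε))), le_abs_self (max 0 (min 1 ((y - (L - ε))/ε)) - max 0 (min 1 ((x - (L - ε))/ε))), neg_abs_le (max 0 (min 1 ((y - (L - ε))/ε)) - max 0 (min 1 ((x - (L - ε))/ε)))]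
    _ ≤ |y - x|/ε + |y - x|/ε := add_le_add h1 h2
    _ = 2/ε * |y - x| := by ring

lemma uReg_eq_one {x : ℝ} (hx : x ≤ L/2) : uReg L ε x = 1 := by simp [uReg, hx]

lemma uReg_eq_zero (hε : 0 < ε) {x : ℝ} (hx1 : L/2 + ε ≤ x) (hx2 : x ≤ L - ε) :
    uReg L ε x = 0 := by
  unfold uReg
  split_ifs with h1 h2
  · linarith
  · have : x = L/2 + ε := le_antisymm h2 hx1
    field_simp [this]; linarith
  · rfl

lemma measurable_uReg : Measurable (uReg L ε) := by
  unfold uReg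
  apply Measurable.ite (measurableSet_le measurable_id measurable_const) measurable_const
  apply Measurable.ite (measurableSet_le measurable_id measurable_const) (by fun_prop)
  apply Measurable.ite (measurableSet_le measurable_id measurable_const) measurable_const
  fun_prop

lemma measurable_joint :
    Measurable (fun p : ℝ × ℝ => (uReg L ε (p.1 + p.2) - uReg L ε p.1)^2 / p.2^2) := by
  apply Measurable.div
  · exact ((measurable_uReg.comp (measurable_fst.add measurable_snd)).sub
      (measurable_uReg.comp measurable_fst)).pow_const 2
  · exact measurable_snd.pow_const 2

lemma int_inv_sq {p q : ℝ} (hp : 0 < p) (hpq : p ≤ q) :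
    ∫ z in Ioo p q, 1/z^2 = 1/p - 1/q := by
  rw [← integral_Ioc_eq_integral_Ioo, ← intervalIntegral.integral_of_le hpq]
  have h0 : (0:ℝ) ∉ uIcc p q := by
    rw [uIcc_of_le hpq]; intro h; exact absurd h.1 (not_le.mpr hp)
  have hcg : ∫ x in p..q, 1/x^2 = ∫ x in p..q, (x:ℝ)^(-2:ℤ) := by
    apply intervalIntegral.integral_congr; intro z hz
    have hz0 : z ≠ 0 := fun h => h0 (h ▸ hz)
    simp [zpow_neg, one_div]
  rw [hcg, integral_zpow (Or.inr ⟨by norm_num, h0⟩)]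
  have hp0 : p ≠ 0 := ne_of_gt hp
  have hq0 : q ≠ 0 := ne_of_gt (lt_of_lt_of_le hp hpq)
  norm_num [zpow_neg, hp0, hq0]
  field_simp; ring

lemma intOn_inv_sq {p q : ℝ} (hp : 0 < p) :
    IntegrableOn (fun z:ℝ => 1/z^2) (Ioo p q) := by
  apply (ContinuousOn.integrableOn_Icc ?_).mono_set Ioo_subset_Icc_self
  exact ContinuousOn.div continuousOn_const (continuous_pow 2).continuousOn
    (fun z hz => pow_ne_zero _ (ne_of_gt (lt_of_lt_of_le hp hz.1)))

lemma int_inv_shift {a b c : ℝ} (hab : a ≤ b) (hbc : b < c) :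
    ∫ x in Ioc a b, 1/(c-x) = Real.log (c-a) - Real.log (c-b) := by
  rw [← intervalIntegral.integral_of_le hab,
    show (fun x => 1/(c-x)) = (fun x => (fun u => 1/u) (c - x)) from rfl,
    intervalIntegral.integral_comp_sub_left (fun u => 1/u) c]
  have h1 : 0 < c - b := by linarith
  have h2 : 0 < c - a := by linarith
  have h0 : (0:ℝ) ∉ uIcc (c-b) (c-a) := by
    rw [uIcc_of_le (by linarith)]; intro h; exact absurd h.1 (not_le.mpr h1)
  rw [integral_one_div h0, Real.log_div (ne_of_gt h2) (ne_of_gt h1)]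

lemma intOn_inv_shift {a b c : ℝ} (hbc : b < c) :
    IntegrableOn (fun x:ℝ => 1/(c-x)) (Ioc a b) := by
  rcases le_or_gt a b with hab | hab
  · apply (ContinuousOn.integrableOn_Icc ?_).mono_set Ioc_subset_Icc_self
    exact ContinuousOn.div continuousOn_const
      (continuous_const.sub continuous_id).continuousOn
      (fun z hz => ne_of_gt (by have := hz.2; simp at this ⊢; linarith))
  · simp [Ioc_eq_empty (not_lt.mpr hab.le), IntegrableOn]

lemma f_le_inv_sq (hε : 0 < ε) (hεL : ε < L/8) {x z : ℝ} (hz : 0 < z)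
    (hx : x ≤ L) (hxz : x + z ≤ L) :
    (uReg L ε (x + z) - uReg L ε x)^2 / z^2 ≤ 1/z^2 := by
  have h1 := uReg_nonneg hε hεL hx
  have h2 := uReg_le_one hε hεL hx
  have h3 := uReg_nonneg hε hεL hxz
  have h4 := uReg_le_one hε hεL hxz
  have : (uReg L ε (x + z) - uReg L ε x)^2 ≤ 1 := by nlinarith
  gcongr

lemma f_le_const (hε : 0 < ε) (hεL : ε < L/8) {x z : ℝ} (hz : 0 < z)
    (hx : x ≤ L) (hxz : x + z ≤ L) :
    (uReg L ε (x + z) - uReg L ε x)^2 / z^2 ≤ 4/ε^2 := by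
  have h := uReg_lip hε hεL hx hxz
  rw [show x + z - x = z by ring, abs_of_pos hz] at h
  rw [div_le_div_iff₀ (by positivity) (by positivity)]
  have h2 := abs_nonneg (uReg L ε (x + z) - uReg L ε x)
  have h3 := sq_abs (uReg L ε (x + z) - uReg L ε x)
  have h5 : |uReg L ε (x + z) - uReg L ε x| * ε ≤ 2 * z := by
    have h6 := mul_le_mul_of_nonneg_right h hε.le
    have h7 : 2 / ε * z * ε = 2 * z := by field_simp
    linarith
  nlinarith [h5, mul_nonneg h2 hε.le]

lemma measurable_fx {x : ℝ} :
    Measurable (fun z => (uReg L ε (x + z) - uReg L ε x)^2 / z^2) := by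
  apply Measurable.div
  · exact ((measurable_uReg.comp (measurable_const.add measurable_id)).sub
      measurable_const).pow_const 2
  · exact measurable_id.pow_const 2

lemma intOn_f (hε : 0 < ε) (hεL : ε < L/8) {x : ℝ} (hx : x ∈ Ioo 0 L)
    {s : Set ℝ} (hs : s ⊆ Ioo 0 (L - x)) (hms : MeasurableSet s) :
    IntegrableOn (fun z => (uReg L ε (x + z) - uReg L ε x)^2 / z^2) s := by
  have hvol : volume s < ⊤ :=
    lt_of_le_of_lt (measure_mono hs) (by simp [Real.volume_Ioo])
  apply Integrable.mono' (g := fun _ => 4/ε^2)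
    (integrableOn_const hvol.ne)
    measurable_fx.aestronglyMeasurable
  rw [ae_restrict_iff' hms]
  apply ae_of_all
  intro z hz
  have hz' := hs hz
  rw [Real.norm_eq_abs, abs_of_nonneg (by positivity)]
  exact f_le_const hε hεL hz'.1 hx.2.le (by have := hz'.2; linarith)

lemma innerI_nonneg {x : ℝ} : 0 ≤ innerI L ε x :=
  setIntegral_nonneg measurableSet_Ioo (fun z _ => by positivity)

lemma innerI_le_univ (hε : 0 < ε) (hεL : ε < L/8) {x : ℝ} (hx : x ∈ Ioo 0 L) :
    innerI L ε x ≤ 5/ε := by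
  have hLx : 0 < L - x := by linarith [hx.2]
  rcases le_or_gt (L - x) ε with h | h
  · have step : innerI L ε x ≤ ∫ z in Ioo 0 (L-x), 4/ε^2 := by
      apply setIntegral_mono_on (intOn_f hε hεL hx (subset_refl _) measurableSet_Ioo)
        (integrableOn_const (by simp [Real.volume_Ioo]))
        measurableSet_Ioo
      intro z hz
      exact f_le_const hε hεL hz.1 hx.2.le (by have := hz.2; linarith)
    rw [setIntegral_const, Real.volume_real_Ioo, smul_eq_mul,
      max_eq_left (by linarith)] at step
    calc innerI L ε x ≤ (L - x - 0) * (4/ε^2) := step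
      _ = (L - x) * (4/ε^2) := by ring
      _ ≤ ε * (4/ε^2) := by gcongr
      _ = 4/ε := by field_simp
      _ ≤ 5/ε := by gcongr <;> norm_num
  · have hsplit : Ioo 0 (L - x) = Ioc 0 ε ∪ Ioo ε (L - x) :=
      (Ioc_union_Ioo_eq_Ioo hε.le h).symm
    have hdisj : Disjoint (Ioc (0:ℝ) ε) (Ioo ε (L - x)) := by
      rw [disjoint_left]; intro z h1 h2; exact absurd h2.1 (not_lt.mpr h1.2)
    have hs1 : Ioc (0:ℝ) ε ⊆ Ioo 0 (L - x) := fun z hz => ⟨hz.1, lt_of_le_of_lt hz.2 h⟩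
    have hs2 : Ioo ε (L - x) ⊆ Ioo 0 (L - x) := fun z hz => ⟨lt_trans hε hz.1, hz.2⟩
    have e : innerI L ε x = (∫ z in Ioc 0 ε, (uReg L ε (x + z) - uReg L ε x)^2 / z^2)
        + ∫ z in Ioo ε (L - x), (uReg L ε (x + z) - uReg L ε x)^2 / z^2 := by
      rw [innerI, hsplit]
      exact setIntegral_union hdisj measurableSet_Ioo
        (intOn_f hε hεL hx hs1 measurableSet_Ioc) (intOn_f hε hεL hx hs2 measurableSet_Ioo)
    have b1 : (∫ z in Ioc 0 ε, (uReg L ε (x + z) - uReg L ε x)^2 / z^2) ≤ 4/ε := by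
      have step : (∫ z in Ioc 0 ε, (uReg L ε (x + z) - uReg L ε x)^2 / z^2)
          ≤ ∫ z in Ioc 0 ε, 4/ε^2 := by
        apply setIntegral_mono_on (intOn_f hε hεL hx hs1 measurableSet_Ioc)
          (integrableOn_const (by simp [Real.volume_Ioc])) measurableSet_Ioc
        intro z hz
        have hz' := hs1 hz
        exact f_le_const hε hεL hz'.1 hx.2.le (by have := hz'.2; linarith)
      rw [setIntegral_const, Real.volume_real_Ioc, smul_eq_mul,
        max_eq_left (by linarith)] at step
      calc _ ≤ (ε - 0) * (4/ε^2) := step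
        _ = 4/ε := by field_simp; ring
    have b2 : (∫ z in Ioo ε (L - x), (uReg L ε (x + z) - uReg L ε x)^2 / z^2) ≤ 1/ε := by
      have step : (∫ z in Ioo ε (L - x), (uReg L ε (x + z) - uReg L ε x)^2 / z^2)
          ≤ ∫ z in Ioo ε (L - x), 1/z^2 := by
        apply setIntegral_mono_on (intOn_f hε hεL hx hs2 measurableSet_Ioo)
          (intOn_inv_sq hε) measurableSet_Ioo
        intro z hz
        have hz' := hs2 hz
        exact f_le_inv_sq hε hεL hz'.1 hx.2.le (by have := hz'.2; linarith)
      rw [int_inv_sq hε h.le] at step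
      have : 1/(L-x) ≥ 0 := by positivity
      linarith
    rw [e]
    have : 4/ε + 1/ε = 5/ε := by field_simp; ring
    linarith

lemma innerI_le_far1 (hε : 0 < ε) (hεL : ε < L/8) {x : ℝ} (hx : x ∈ Ioc 0 (L/2 - ε)) :
    innerI L ε x ≤ 1/(L/2 - x) := by
  have hL : 0 < L := by linarith
  set a := L/2 - x with ha
  have hax : 0 < a := by have := hx.2; simp only [ha]; linarith
  have haε : ε ≤ a := by have := hx.2; simp only [ha]; linarith
  have haL : a < L - x := by simp only [ha]; linarith
  have hxL : x ∈ Ioo 0 L := ⟨hx.1, by linarith [hx.2]⟩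
  have hsplit : Ioo 0 (L - x) = Ioc 0 a ∪ Ioo a (L - x) :=
    (Ioc_union_Ioo_eq_Ioo hax.le haL).symm
  have hdisj : Disjoint (Ioc (0:ℝ) a) (Ioo a (L - x)) := by
    rw [disjoint_left]; intro z h1 h2; exact absurd h2.1 (not_lt.mpr h1.2)
  have hs1 : Ioc (0:ℝ) a ⊆ Ioo 0 (L - x) := fun z hz => ⟨hz.1, lt_of_le_of_lt hz.2 haL⟩
  have hs2 : Ioo a (L - x) ⊆ Ioo 0 (L - x) := fun z hz => ⟨lt_trans hax hz.1, hz.2⟩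
  have e : innerI L ε x = (∫ z in Ioc 0 a, (uReg L ε (x + z) - uReg L ε x)^2 / z^2)
      + ∫ z in Ioo a (L - x), (uReg L ε (x + z) - uReg L ε x)^2 / z^2 := by
    rw [innerI, hsplit]
    exact setIntegral_union hdisj measurableSet_Ioo
      (intOn_f hε hεL hxL hs1 measurableSet_Ioc) (intOn_f hε hεL hxL hs2 measurableSet_Ioo)
  have b1 : (∫ z in Ioc 0 a, (uReg L ε (x + z) - uReg L ε x)^2 / z^2) = 0 := by
    rw [setIntegral_congr_fun measurableSet_Ioc
      (g := fun _ => (0:ℝ)) ?_, integral_zero]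
    intro z hz
    have h1 : uReg L ε (x + z) = 1 := uReg_eq_one (by have := hz.2; simp only [ha] at this ⊢; linarith)
    have h2 : uReg L ε x = 1 := uReg_eq_one (by have := hx.2; linarith)
    simp [h1, h2]
  have b2 : (∫ z in Ioo a (L - x), (uReg L ε (x + z) - uReg L ε x)^2 / z^2) ≤ 1/a := by
    have step : (∫ z in Ioo a (L - x), (uReg L ε (x + z) - uReg L ε x)^2 / z^2)
        ≤ ∫ z in Ioo a (L - x), 1/z^2 := by
      apply setIntegral_mono_on (intOn_f hε hεL hxL hs2 measurableSet_Ioo)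
        (intOn_inv_sq hax) measurableSet_Ioo
      intro z hz
      have hz' := hs2 hz
      exact f_le_inv_sq hε hεL hz'.1 hxL.2.le (by have := hz'.2; linarith)
    rw [int_inv_sq hax haL.le] at step
    have : 1/(L-x) ≥ 0 := le_of_lt (div_pos one_pos (by linarith [hxL.2]))
    linarith
  rw [e, b1]; linarith

lemma innerI_le_far2 (hε : 0 < ε) (hεL : ε < L/8) {x : ℝ}
    (hx : x ∈ Ioc (L/2 + ε) (L - 2*ε)) :
    innerI L ε x ≤ 1/(L - ε - x) := by
  have hL : 0 < L := by linarith
  set a := L - ε - x with ha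
  have hax : 0 < a := by have := hx.2; simp only [ha]; linarith
  have haL : a < L - x := by simp only [ha]; linarith
  have hxL : x ∈ Ioo 0 L := ⟨by have := hx.1; linarith, by have := hx.2; linarith⟩
  have hsplit : Ioo 0 (L - x) = Ioc 0 a ∪ Ioo a (L - x) :=
    (Ioc_union_Ioo_eq_Ioo hax.le haL).symm
  have hdisj : Disjoint (Ioc (0:ℝ) a) (Ioo a (L - x)) := by
    rw [disjoint_left]; intro z h1 h2; exact absurd h2.1 (not_lt.mpr h1.2)
  have hs1 : Ioc (0:ℝ) a ⊆ Ioo 0 (L - x) := fun z hz => ⟨hz.1, lt_of_le_of_lt hz.2 haL⟩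
  have hs2 : Ioo a (L - x) ⊆ Ioo 0 (L - x) := fun z hz => ⟨lt_trans hax hz.1, hz.2⟩
  have e : innerI L ε x = (∫ z in Ioc 0 a, (uReg L ε (x + z) - uReg L ε x)^2 / z^2)
      + ∫ z in Ioo a (L - x), (uReg L ε (x + z) - uReg L ε x)^2 / z^2 := by
    rw [innerI, hsplit]
    exact setIntegral_union hdisj measurableSet_Ioo
      (intOn_f hε hεL hxL hs1 measurableSet_Ioc) (intOn_f hε hεL hxL hs2 measurableSet_Ioo)
  have b1 : (∫ z in Ioc 0 a, (uReg L ε (x + z) - uReg L ε x)^2 / z^2) = 0 := by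
    rw [setIntegral_congr_fun measurableSet_Ioc
      (g := fun _ => (0:ℝ)) ?_, integral_zero]
    intro z hz
    have h1 : uReg L ε (x + z) = 0 := uReg_eq_zero hε
      (by have := hz.1; have := hx.1; linarith)
      (by have := hz.2; simp only [ha] at this; linarith)
    have h2 : uReg L ε x = 0 := uReg_eq_zero hε (hx.1.le) (by have := hx.2; linarith)
    simp [h1, h2]
  have b2 : (∫ z in Ioo a (L - x), (uReg L ε (x + z) - uReg L ε x)^2 / z^2) ≤ 1/a := by
    have step : (∫ z in Ioo a (L - x), (uReg L ε (x + z) - uReg L ε x)^2 / z^2)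
        ≤ ∫ z in Ioo a (L - x), 1/z^2 := by
      apply setIntegral_mono_on (intOn_f hε hεL hxL hs2 measurableSet_Ioo)
        (intOn_inv_sq hax) measurableSet_Ioo
      intro z hz
      have hz' := hs2 hz
      exact f_le_inv_sq hε hεL hz'.1 hxL.2.le (by have := hz'.2; linarith)
    rw [int_inv_sq hax haL.le] at step
    have : 1/(L-x) ≥ 0 := le_of_lt (div_pos one_pos (by linarith [hxL.2]))
    linarith
  rw [e, b1]; linarith

lemma innerI_ge (hε : 0 < ε) (hεL : ε < L/8) {x : ℝ} (hx : x ∈ Ioo (L/4) (L/2)) :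
    1/(L/2 + ε - x) - 1/(L - ε - x) ≤ innerI L ε x := by
  have hL : 0 < L := by linarith
  set p := L/2 + ε - x with hp
  set q := L - ε - x with hq
  have hp0 : 0 < p := by have := hx.2; simp only [hp]; linarith
  have hpq : p ≤ q := by simp only [hp, hq]; linarith
  have hqL : q < L - x := by simp only [hq]; linarith
  have hxL : x ∈ Ioo 0 L := ⟨by have := hx.1; linarith, by have := hx.2; linarith⟩
  have hsub : Ioo p q ⊆ Ioo 0 (L - x) := fun z hz => ⟨lt_trans hp0 hz.1, lt_trans hz.2 hqL⟩
  have e : (∫ z in Ioo p q, (uReg L ε (x + z) - uReg L ε x)^2 / z^2)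
      = ∫ z in Ioo p q, 1/z^2 := by
    apply setIntegral_congr_fun measurableSet_Ioo
    intro z hz
    have h1 : uReg L ε (x + z) = 0 := uReg_eq_zero hε
      (by have := hz.1; simp only [hp] at this; linarith)
      (by have := hz.2; simp only [hq] at this; linarith)
    have h2 : uReg L ε x = 1 := uReg_eq_one (by have := hx.2; linarith)
    simp [h1, h2]
  have mono : (∫ z in Ioo p q, (uReg L ε (x + z) - uReg L ε x)^2 / z^2) ≤ innerI L ε x := by
    apply setIntegral_mono_set (intOn_f hε hεL hxL (subset_refl _) measurableSet_Ioo)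
      (ae_of_all _ (fun z => by positivity)) (HasSubset.Subset.eventuallyLE hsub)
  rw [e, int_inv_sq hp0 hpq] at mono
  exact mono

lemma measurable_innerI : Measurable (innerI L ε) := by
  have hset : MeasurableSet {p : ℝ × ℝ | 0 < p.2 ∧ p.2 < L - p.1} :=
    (measurableSet_lt measurable_const measurable_snd).inter
      (measurableSet_lt measurable_snd (measurable_const.sub measurable_fst))
  have hgm : Measurable (fun p : ℝ × ℝ =>
      if 0 < p.2 ∧ p.2 < L - p.1 then (uReg L ε (p.1 + p.2) - uReg L ε p.1)^2 / p.2^2 else 0) :=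
    Measurable.ite hset measurable_joint measurable_const
  have e : innerI L ε = fun x => ∫ z, (fun p : ℝ × ℝ =>
      if 0 < p.2 ∧ p.2 < L - p.1 then (uReg L ε (p.1 + p.2) - uReg L ε p.1)^2 / p.2^2 else 0)
      (x, z) := by
    funext x
    rw [innerI, ← integral_indicator measurableSet_Ioo]
    congr 1
    funext z
    simp only [indicator_apply, mem_Ioo]
  rw [e]
  exact (hgm.stronglyMeasurable.integral_prod_right').measurable

lemma intOn_innerI (hε : 0 < ε) (hεL : ε < L/8) {s : Set ℝ} (hs : s ⊆ Ioo 0 L)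
    (hms : MeasurableSet s) : IntegrableOn (innerI L ε) s := by
  have hvol : volume s < ⊤ :=
    lt_of_le_of_lt (measure_mono hs) (by simp [Real.volume_Ioo])
  apply Integrable.mono' (g := fun _ => 5/ε)
    (integrableOn_const hvol.ne)
    measurable_innerI.aestronglyMeasurable
  rw [ae_restrict_iff' hms]
  apply ae_of_all
  intro x hx
  rw [Real.norm_eq_abs, abs_of_nonneg innerI_nonneg]
  exact innerI_le_univ hε hεL (hs hx)

end Aux

theorem stmt14 (L : ℝ) (hL : 0 < L) :
    ∃ c₁ c₂ : ℝ, 0 < c₁ ∧ c₁ ≤ c₂ ∧ ∃ ε₀ > 0, ∀ ε : ℝ, 0 < ε → ε < ε₀ → ε < L / 8 →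
      c₁ * Real.log (1 / ε) ≤
        (∫ x in Set.Ioo 0 L, ∫ z in Set.Ioo 0 (L - x),
          (uReg L ε (x + z) - uReg L ε x) ^ 2 / z ^ 2) ∧
      (∫ x in Set.Ioo 0 L, ∫ z in Set.Ioo 0 (L - x),
          (uReg L ε (x + z) - uReg L ε x) ^ 2 / z ^ 2) ≤ c₂ * Real.log (1 / ε) := by
  refine ⟨1/2, 2 + max 0 (2*Real.log (L/2) + 20), by norm_num,
    by nlinarith [le_max_left (0:ℝ) (2*Real.log (L/2) + 20)],
    min (min (L/8) (Real.exp (-1))) ((L/8)^2), ?_, ?_⟩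
  · have h1 : 0 < L/8 := by linarith
    have h2 : 0 < Real.exp (-1) := Real.exp_pos _
    positivity
  intro ε hε hεε hεL
  have hεexp : ε < Real.exp (-1) :=
    lt_of_lt_of_le hεε (le_trans (min_le_left _ _) (min_le_right _ _))
  have hεsq : ε < (L/8)^2 := lt_of_lt_of_le hεε (min_le_right _ _)
  have hlog1 : 1 < Real.log (1/ε) := by
    rw [one_div, Real.log_inv]
    have := Real.log_lt_log hε hεexp
    rw [Real.log_exp] at this
    linarith
  have hlogsq : Real.log ε < 2 * Real.log (L/8) := by
    have := Real.log_lt_log hε hεsq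
    rwa [Real.log_pow, Nat.cast_ofNat] at this
  have hlogeq : Real.log (1/ε) = -Real.log ε := by rw [one_div, Real.log_inv]
  have hrw : (∫ x in Set.Ioo 0 L, ∫ z in Set.Ioo 0 (L - x),
      (uReg L ε (x + z) - uReg L ε x) ^ 2 / z ^ 2) = ∫ x in Ioo 0 L, innerI L ε x := rfl
  rw [hrw]
  constructor
  · -- lower bound
    have hsub : Ioo (L/4) (L/2) ⊆ Ioo 0 L := fun x hx => ⟨by have := hx.1; linarith,
      by have := hx.2; linarith⟩
    have step1 : (∫ x in Ioo (L/4) (L/2), innerI L ε x) ≤ ∫ x in Ioo 0 L, innerI L ε x :=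
      setIntegral_mono_set (intOn_innerI hε hεL (subset_refl _) measurableSet_Ioo)
        (ae_of_all _ (fun x => innerI_nonneg)) (HasSubset.Subset.eventuallyLE hsub)
    have hint1 : IntegrableOn (fun x:ℝ => 1/(L/2 + ε - x)) (Ioo (L/4) (L/2)) :=
      (intOn_inv_shift (a := L/4) (by linarith)).mono_set Ioo_subset_Ioc_self
    have hint2 : IntegrableOn (fun x:ℝ => 1/(L - ε - x)) (Ioo (L/4) (L/2)) :=
      (intOn_inv_shift (a := L/4) (by linarith)).mono_set Ioo_subset_Ioc_self
    have step2 : (∫ x in Ioo (L/4) (L/2), (1/(L/2 + ε - x) - 1/(L - ε - x)))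
        ≤ ∫ x in Ioo (L/4) (L/2), innerI L ε x := by
      apply setIntegral_mono_on (hint1.sub hint2)
        (intOn_innerI hε hεL hsub measurableSet_Ioo) measurableSet_Ioo
      intro x hx
      exact innerI_ge hε hεL hx
    have hval : (∫ x in Ioo (L/4) (L/2), (1/(L/2 + ε - x) - 1/(L - ε - x)))
        = (Real.log (L/2 + ε - L/4) - Real.log (L/2 + ε - L/2))
          - (Real.log (L - ε - L/4) - Real.log (L - ε - L/2)) := by
      rw [integral_sub hint1 hint2,
        ← integral_Ioc_eq_integral_Ioo, ← integral_Ioc_eq_integral_Ioo,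
        int_inv_shift (by linarith) (by linarith), int_inv_shift (by linarith) (by linarith)]
    have e1 : L/2 + ε - L/2 = ε := by ring
    rw [e1] at hval
    -- bound the value from below
    have hb1 : Real.log (L/4) ≤ Real.log (L/2 + ε - L/4) :=
      Real.log_le_log (by linarith) (by linarith)
    have hb2 : Real.log (L - ε - L/4) ≤ Real.log (3*L/4) :=
      Real.log_le_log (by linarith) (by linarith)
    have hb3 : Real.log (3*L/8) ≤ Real.log (L - ε - L/2) :=
      Real.log_le_log (by linarith) (by linarith)
    have hK : Real.log (L/4) - Real.log (3*L/4) + Real.log (3*L/8) = Real.log (L/8) := by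
      have hm := Real.log_mul (ne_of_gt (show (0:ℝ) < L/4 by linarith))
        (ne_of_gt (show (0:ℝ) < 3*L/8 by linarith))
      have hd := Real.log_div (ne_of_gt (show (0:ℝ) < (L/4)*(3*L/8) by nlinarith))
        (ne_of_gt (show (0:ℝ) < 3*L/4 by linarith))
      have h3 : (L/4)*(3*L/8)/(3*L/4) = L/8 := by field_simp
      rw [h3] at hd
      linarith
    have hfin : Real.log (L/8) > (1/2) * Real.log ε := by linarith
    calc (1/2) * Real.log (1/ε) = -(1/2) * Real.log ε := by rw [hlogeq]; ring
      _ ≤ -Real.log ε + Real.log (L/8) := by linarith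
      _ ≤ (Real.log (L/2 + ε - L/4) - Real.log ε)
          - (Real.log (L - ε - L/4) - Real.log (L - ε - L/2)) := by linarith
      _ = ∫ x in Ioo (L/4) (L/2), (1/(L/2 + ε - x) - 1/(L - ε - x)) := hval.symm
      _ ≤ ∫ x in Ioo (L/4) (L/2), innerI L ε x := step2
      _ ≤ ∫ x in Ioo 0 L, innerI L ε x := step1
  · -- upper bound
    have hA : Ioc (0:ℝ) (L/2 - ε) ⊆ Ioo 0 L := fun x hx => ⟨hx.1, by have := hx.2; linarith⟩
    have hB : Ioc (L/2 - ε) (L/2 + ε) ⊆ Ioo 0 L := fun x hx =>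
      ⟨by have := hx.1; linarith, by have := hx.2; linarith⟩
    have hC : Ioc (L/2 + ε) (L - 2*ε) ⊆ Ioo 0 L := fun x hx =>
      ⟨by have := hx.1; linarith, by have := hx.2; linarith⟩
    have hD : Ioo (L - 2*ε) L ⊆ Ioo 0 L := fun x hx => ⟨by have := hx.1; linarith, hx.2⟩
    have hsplit : Ioo (0:ℝ) L = (Ioc 0 (L/2 - ε) ∪ Ioc (L/2 - ε) (L/2 + ε)
        ∪ Ioc (L/2 + ε) (L - 2*ε)) ∪ Ioo (L - 2*ε) L := by
      rw [Ioc_union_Ioc_eq_Ioc (by linarith) (by linarith),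
        Ioc_union_Ioc_eq_Ioc (by linarith) (by linarith),
        Ioc_union_Ioo_eq_Ioo (by linarith) (by linarith)]
    have hdisj1 : Disjoint (Ioc (0:ℝ) (L/2 - ε)) (Ioc (L/2 - ε) (L/2 + ε)) := by
      rw [disjoint_left]; intro z h1 h2; exact absurd h2.1 (not_lt.mpr h1.2)
    have hdisj2 : Disjoint (Ioc (0:ℝ) (L/2 - ε) ∪ Ioc (L/2 - ε) (L/2 + ε))
        (Ioc (L/2 + ε) (L - 2*ε)) := by
      rw [disjoint_left]; intro z h1 h2
      rcases h1 with h1 | h1 <;> exact absurd h2.1 (not_lt.mpr (by linarith [h1.2]))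
    have hdisj3 : Disjoint (Ioc (0:ℝ) (L/2 - ε) ∪ Ioc (L/2 - ε) (L/2 + ε)
        ∪ Ioc (L/2 + ε) (L - 2*ε)) (Ioo (L - 2*ε) L) := by
      rw [disjoint_left]; intro z h1 h2
      rcases h1 with (h1 | h1) | h1 <;> exact absurd h2.1 (not_lt.mpr (by linarith [h1.2]))
    have iA := intOn_innerI hε hεL hA measurableSet_Ioc
    have iB := intOn_innerI hε hεL hB measurableSet_Ioc
    have iC := intOn_innerI hε hεL hC measurableSet_Ioc
    have iD := intOn_innerI hε hεL hD measurableSet_Ioo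
    have esum : (∫ x in Ioo 0 L, innerI L ε x)
        = (((∫ x in Ioc 0 (L/2 - ε), innerI L ε x)
          + ∫ x in Ioc (L/2 - ε) (L/2 + ε), innerI L ε x)
          + ∫ x in Ioc (L/2 + ε) (L - 2*ε), innerI L ε x)
          + ∫ x in Ioo (L - 2*ε) L, innerI L ε x := by
      rw [hsplit, setIntegral_union hdisj3 measurableSet_Ioo ((iA.union iB).union iC) iD,
        setIntegral_union hdisj2 measurableSet_Ioc (iA.union iB) iC,
        setIntegral_union hdisj1 measurableSet_Ioc iA iB]
    -- piece A
    have bA : (∫ x in Ioc 0 (L/2 - ε), innerI L ε x) ≤ Real.log (L/2) - Real.log ε := by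
      have step : (∫ x in Ioc 0 (L/2 - ε), innerI L ε x)
          ≤ ∫ x in Ioc 0 (L/2 - ε), 1/(L/2 - x) := by
        apply setIntegral_mono_on iA (intOn_inv_shift (by linarith)) measurableSet_Ioc
        intro x hx
        exact innerI_le_far1 hε hεL hx
      rw [int_inv_shift (by linarith) (by linarith)] at step
      have e2 : L/2 - (0:ℝ) = L/2 := by ring
      have e3 : L/2 - (L/2 - ε) = ε := by ring
      rw [e2, e3] at step
      exact step
    -- piece C
    have bC : (∫ x in Ioc (L/2 + ε) (L - 2*ε), innerI L ε x)
        ≤ Real.log (L/2) - Real.log ε := by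
      have step : (∫ x in Ioc (L/2 + ε) (L - 2*ε), innerI L ε x)
          ≤ ∫ x in Ioc (L/2 + ε) (L - 2*ε), 1/(L - ε - x) := by
        apply setIntegral_mono_on iC (intOn_inv_shift (by linarith)) measurableSet_Ioc
        intro x hx
        exact innerI_le_far2 hε hεL hx
      rw [int_inv_shift (by linarith) (by linarith)] at step
      have e3 : L - ε - (L - 2*ε) = ε := by ring
      rw [e3] at step
      have : Real.log (L - ε - (L/2 + ε)) ≤ Real.log (L/2) :=
        Real.log_le_log (by linarith) (by linarith)
      linarith
    -- piece B
    have bB : (∫ x in Ioc (L/2 - ε) (L/2 + ε), innerI L ε x) ≤ 10 := by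
      have step : (∫ x in Ioc (L/2 - ε) (L/2 + ε), innerI L ε x)
          ≤ ∫ x in Ioc (L/2 - ε) (L/2 + ε), 5/ε := by
        apply setIntegral_mono_on iB
          (integrableOn_const (by simp [Real.volume_Ioc])) measurableSet_Ioc
        intro x hx
        exact innerI_le_univ hε hεL (hB hx)
      rw [setIntegral_const, Real.volume_real_Ioc, smul_eq_mul,
        max_eq_left (by linarith)] at step
      have e : (L/2 + ε - (L/2 - ε)) * (5/ε) = 10 := by field_simp; ring
      rw [e] at step
      exact step
    -- piece D
    have bD : (∫ x in Ioo (L - 2*ε) L, innerI L ε x) ≤ 10 := by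
      have step : (∫ x in Ioo (L - 2*ε) L, innerI L ε x)
          ≤ ∫ x in Ioo (L - 2*ε) L, 5/ε := by
        apply setIntegral_mono_on iD
          (integrableOn_const (by simp [Real.volume_Ioo, ENNReal.mul_eq_top])) measurableSet_Ioo
        intro x hx
        exact innerI_le_univ hε hεL (hD hx)
      rw [setIntegral_const, Real.volume_real_Ioo, smul_eq_mul,
        max_eq_left (by linarith)] at step
      have e : (L - (L - 2*ε)) * (5/ε) = 10 := by field_simp; ring
      rw [e] at step
      exact step
    have hmax : 2*Real.log (L/2) + 20 ≤ max 0 (2*Real.log (L/2) + 20) := le_max_right _ _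
    have hmax0 : 0 ≤ max 0 (2*Real.log (L/2) + 20) := le_max_left _ _
    calc (∫ x in Ioo 0 L, innerI L ε x)
        ≤ 2*(Real.log (L/2) - Real.log ε) + 20 := by rw [esum]; linarith
      _ = 2*Real.log (1/ε) + (2*Real.log (L/2) + 20) := by rw [hlogeq]; ring
      _ ≤ 2*Real.log (1/ε) + max 0 (2*Real.log (L/2) + 20) * Real.log (1/ε) := by
          have h9 : max 0 (2*Real.log (L/2) + 20) ≤ max 0 (2*Real.log (L/2) + 20) * Real.log (1/ε) :=
            le_mul_of_one_le_right hmax0 hlog1.le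
          linarith
      _ = (2 + max 0 (2*Real.log (L/2) + 20)) * Real.log (1/ε) := by ring
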